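/- Let μ be a directed metric on a nonempty finite set S and let (V,d) be an extension of (S,μ). Then d is cyclically tight if and only if there exists a map ρ : V → Q_μ^+ with D_∞(ρ(x), ρ(y)) = d(x,y) for all x,y ∈ V, ρ(s) = μ_s for all s ∈ S, and ρ(V) balanced. Moreover, if d is cyclically tight, then any such ρ satisfies ρ(x) = d_x for all x ∈ V. -/

import Mathlib

open scoped BigOperators

/-- Points of `ℝ^{S^{cr}}`: pairs `p = (p^c, p^r)` of functions `S → ℝ`,
with the componentwise partial order (the product/pi order). -/
abbrev Pt (S : Type*) := (S → ℝ) × (S → ℝ)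

/-- `μ` is a directed distance: nonnegative with zero diagonal. -/
def DirDist {S : Type*} (μ : S → S → ℝ) : Prop :=
  (∀ s t, 0 ≤ μ s t) ∧ (∀ s, μ s s = 0)

/-- `d` is a directed metric: a directed distance satisfying the triangle inequality. -/
def DirMetric {V : Type*} (d : V → V → ℝ) : Prop :=
  DirDist d ∧ ∀ x y z, d x z ≤ d x y + d y z

/-- The polyhedron `Π_μ`. -/
def PiP {S : Type*} (μ : S → S → ℝ) : Set (Pt S) :=
  {p | ∀ s t, μ s t ≤ p.1 s + p.2 t}

/-- The polyhedron `P_μ = Π_μ ∩ ℝ_+^{S^{cr}}`. -/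
def PP {S : Type*} (μ : S → S → ℝ) : Set (Pt S) :=
  {p ∈ PiP μ | 0 ≤ p}

/-- The directed tight span `T_μ`: minimal elements of `P_μ`. -/
def TT {S : Type*} (μ : S → S → ℝ) : Set (Pt S) :=
  {p ∈ PP μ | ∀ q ∈ PP μ, q ≤ p → q = p}

/-- `Q_μ`: minimal elements of `Π_μ`. -/
def QQ {S : Type*} (μ : S → S → ℝ) : Set (Pt S) :=
  {p ∈ PiP μ | ∀ q ∈ PiP μ, q ≤ p → q = p}

/-- `Q_μ^+ = Q_μ ∩ ℝ_+^{S^{cr}}`. -/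
def QP {S : Type*} (μ : S → S → ℝ) : Set (Pt S) :=
  QQ μ ∩ {p | 0 ≤ p}

/-- `D_∞^+(f,g) = max_x (g(x) - f(x))_+`. -/
noncomputable def Dplus {X : Type*} [Fintype X] (f g : X → ℝ) : ℝ :=
  ⨆ x, max (g x - f x) 0

/-- `D_∞(p,q) = max ( D_∞^+(p^c,q^c), D_∞^+(q^r,p^r) )`. -/
noncomputable def Dinf {S : Type*} [Fintype S] (p q : Pt S) : ℝ :=
  max (Dplus p.1 q.1) (Dplus q.2 p.2)

/-- A subset `R` is balanced if no pair `p, q ∈ R` satisfies `p^c < q^c`,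
and no pair satisfies `p^r < q^r`. -/
def BalancedSet {S : Type*} (R : Set (Pt S)) : Prop :=
  (¬ ∃ p ∈ R, ∃ q ∈ R, ∀ s, p.1 s < q.1 s) ∧
  (¬ ∃ p ∈ R, ∃ q ∈ R, ∀ s, p.2 s < q.2 s)

/-- The vector `e = (1, -1)` spanning the linearity space of `Π_μ`. -/
def eVec (S : Type*) : Pt S := (fun _ => 1, fun _ => -1)

/-- `R ⊆ Q_μ` is a section: every point of `Q_μ` differs from exactly one point
of `R` by a multiple of `e`. -/
def IsSection {S : Type*} (μ : S → S → ℝ) (R : Set (Pt S)) : Prop :=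
  R ⊆ QQ μ ∧ ∀ q ∈ QQ μ, ∃! p, p ∈ R ∧ ∃ α : ℝ, q - p = α • eVec S

/-- The length of the cycle `(x 0, x 1, …, x m)` with respect to `d`. -/
def cycLen {V : Type*} (d : V → V → ℝ) (m : ℕ) (x : Fin (m + 1) → V) : ℝ :=
  ∑ i, d (x i) (x (i + 1))


/-- The canonical point `μ_s` of `ℝ^{S^{cr}}`. -/
def muVec {S : Type*} (μ : S → S → ℝ) (s : S) : Pt S :=
  (fun t => μ t s, fun t => μ s t)

/-- The point `d_x ∈ ℝ^{S^{cr}}` associated with `x ∈ V`. -/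
def dVec {V : Type*} (S : Set V) (d : V → V → ℝ) (x : V) : Pt S :=
  (fun s => d s x, fun s => d x s)

/-- `(V,d)` is a cyclically tight extension of `(S,μ)`:  `d` is a directed
metric on `V` restricting to `μ` on `S`, and there is no extension `d'` of `μ`
whose cycle lengths are all at most those of `d`, with strict inequality on
some cycle. -/
def IsCycTightExt {V : Type*} (S : Set V) (μ : S → S → ℝ) (d : V → V → ℝ) : Prop :=
  DirMetric d ∧ (∀ s t : S, d s t = μ s t) ∧
  ¬ ∃ d' : V → V → ℝ, DirMetric d' ∧ (∀ s t : S, d' s t = μ s t) ∧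
      (∀ (m : ℕ) (x : Fin (m + 1) → V), cycLen d' m x ≤ cycLen d m x) ∧
      (∃ (m : ℕ) (x : Fin (m + 1) → V), cycLen d' m x < cycLen d m x)

namespace Stmt12Aux

variable {V : Type*}

lemma sum_cyc' {m : ℕ} (x : Fin (m+1) → V) (φ : V → ℝ) :
    (∑ i, φ (x (i + 1))) = ∑ i, φ (x i) :=
  Fintype.sum_equiv (Equiv.addRight 1) _ _ (fun _ => rfl)

lemma cycLen_le_of_edge {d₁ d₂ : V → V → ℝ} {φ : V → ℝ}
    (h : ∀ u v, d₁ u v ≤ d₂ u v + (φ v - φ u)) (m : ℕ) (x : Fin (m+1) → V) :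
    cycLen d₁ m x ≤ cycLen d₂ m x := by
  have h1 : cycLen d₁ m x ≤ ∑ i, (d₂ (x i) (x (i+1)) + (φ (x (i+1)) - φ (x i))) :=
    Finset.sum_le_sum fun i _ => h _ _
  have h2 : (∑ i, (d₂ (x i) (x (i+1)) + (φ (x (i+1)) - φ (x i))))
      = cycLen d₂ m x + ((∑ i, φ (x (i+1))) - ∑ i, φ (x i)) := by
    rw [Finset.sum_add_distrib, Finset.sum_sub_distrib]; rfl
  rw [h2, sum_cyc' x φ] at h1
  linarith

lemma cycLen_eq_of_edge {d₁ d₂ : V → V → ℝ} {φ : V → ℝ}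
    (h : ∀ u v, d₁ u v = d₂ u v + (φ v - φ u)) (m : ℕ) (x : Fin (m+1) → V) :
    cycLen d₁ m x = cycLen d₂ m x := by
  refine le_antisymm (cycLen_le_of_edge (fun u v => le_of_eq (h u v)) m x)
    (cycLen_le_of_edge (φ := -φ) (fun u v => ?_) m x)
  have := h u v
  simp only [Pi.neg_apply]
  linarith

lemma cycLen_sub (d₁ d₂ : V → V → ℝ) (m : ℕ) (x : Fin (m+1) → V) :
    cycLen (fun u v => d₁ u v - d₂ u v) m x = cycLen d₁ m x - cycLen d₂ m x :=
  Finset.sum_sub_distrib _ _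

lemma cycLen_two (e : V → V → ℝ) (a b : V) :
    cycLen e 1 ![a, b] = e a b + e b a := by
  have h0 : ((0:Fin 2) + 1) = 1 := rfl
  have h1 : ((1:Fin 2) + 1) = 0 := rfl
  simp [cycLen, Fin.sum_univ_two, h0, h1]

section DplusL
variable {X : Type*} [Fintype X] [Nonempty X]

lemma dplus_le {f g : X → ℝ} {c : ℝ} (hc : 0 ≤ c) (h : ∀ x, g x - f x ≤ c) : Dplus f g ≤ c := by
  unfold Dplus; exact ciSup_le fun x => max_le (h x) hc

lemma le_dplus (f g : X → ℝ) (x : X) : max (g x - f x) 0 ≤ Dplus f g := by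
  unfold Dplus; exact le_ciSup (Set.Finite.bddAbove (Set.finite_range (fun x => max (g x - f x) 0))) x

lemma sub_le_dplus (f g : X → ℝ) (x : X) : g x - f x ≤ Dplus f g :=
  le_trans (le_max_left _ _) (le_dplus f g x)

lemma dplus_nonneg (f g : X → ℝ) : 0 ≤ Dplus f g :=
  le_trans (le_max_right _ 0) (le_dplus f g (Classical.arbitrary X))

lemma dplus_exists (f g : X → ℝ) : ∃ x, Dplus f g = max (g x - f x) 0 := by
  obtain ⟨x, hx⟩ := Finite.exists_max (fun x => max (g x - f x) 0)
  refine ⟨x, le_antisymm ?_ (le_dplus f g x)⟩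
  unfold Dplus; exact ciSup_le hx

end DplusL

end Stmt12Aux
namespace Stmt12Aux
section QQl
variable {V : Type*} {S : Set V} [Fintype ↥S] [Nonempty ↥S] {μ : ↥S → ↥S → ℝ}

lemma qq_tight_c {p : Pt ↥S} (hp : p ∈ QQ μ) (s : ↥S) : ∃ t, p.1 s + p.2 t = μ s t := by
  classical
  by_contra h
  push_neg at h
  obtain ⟨t₀, ht₀⟩ := Finite.exists_min (fun t => p.1 s + p.2 t - μ s t)
  have hη : 0 < p.1 s + p.2 t₀ - μ s t₀ := by
    have h1 : μ s t₀ ≤ p.1 s + p.2 t₀ := hp.1 s t₀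
    have h2 : p.1 s + p.2 t₀ ≠ μ s t₀ := h t₀
    cases' lt_or_eq_of_le h1 with h3 h3
    · linarith
    · exact absurd h3.symm h2
  set η := p.1 s + p.2 t₀ - μ s t₀ with hηdef
  set q : Pt ↥S := (Function.update p.1 s (p.1 s - η), p.2) with hqdef
  have hqPi : q ∈ PiP μ := by
    intro s' t
    by_cases hs' : s' = s
    · subst hs'
      have h4 := ht₀ t
      simp only [hqdef, Function.update_self]
      linarith
    · simp only [hqdef, Function.update_of_ne hs']
      exact hp.1 s' t
  have hqle : q ≤ p := by
    rw [Prod.le_def]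
    constructor
    · intro s'
      by_cases hs' : s' = s
      · subst hs'; simp only [hqdef, Function.update_self]; linarith
      · simp only [hqdef, Function.update_of_ne hs']; exact le_refl _
    · exact le_refl _
  have := hp.2 q hqPi hqle
  have h5 : q.1 s = p.1 s := by rw [this]
  simp only [hqdef, Function.update_self] at h5
  linarith

lemma qq_tight_r {p : Pt ↥S} (hp : p ∈ QQ μ) (t : ↥S) : ∃ s, p.1 s + p.2 t = μ s t := by
  classical
  by_contra h
  push_neg at h
  obtain ⟨s₀, hs₀⟩ := Finite.exists_min (fun s => p.1 s + p.2 t - μ s t)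
  have hη : 0 < p.1 s₀ + p.2 t - μ s₀ t := by
    have h1 : μ s₀ t ≤ p.1 s₀ + p.2 t := hp.1 s₀ t
    have h2 : p.1 s₀ + p.2 t ≠ μ s₀ t := h s₀
    cases' lt_or_eq_of_le h1 with h3 h3
    · linarith
    · exact absurd h3.symm h2
  set η := p.1 s₀ + p.2 t - μ s₀ t with hηdef
  set q : Pt ↥S := (p.1, Function.update p.2 t (p.2 t - η)) with hqdef
  have hqPi : q ∈ PiP μ := by
    intro s t'
    by_cases ht' : t' = t
    · subst ht'
      have h4 := hs₀ s
      simp only [hqdef, Function.update_self]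
      linarith
    · simp only [hqdef, Function.update_of_ne ht']
      exact hp.1 s t'
  have hqle : q ≤ p := by
    rw [Prod.le_def]
    constructor
    · exact le_refl _
    · intro t'
      by_cases ht' : t' = t
      · subst ht'; simp only [hqdef, Function.update_self]; linarith
      · simp only [hqdef, Function.update_of_ne ht']; exact le_refl _
  have := hp.2 q hqPi hqle
  have h5 : q.2 t = p.2 t := by rw [this]
  simp only [hqdef, Function.update_self] at h5
  linarith

lemma mem_qq_of_tight {p : Pt ↥S} (hPi : p ∈ PiP μ)
    (hc : ∀ s, ∃ t, p.1 s + p.2 t = μ s t) (hr : ∀ t, ∃ s, p.1 s + p.2 t = μ s t) :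
    p ∈ QQ μ := by
  refine ⟨hPi, fun q hq hle => ?_⟩
  rw [Prod.le_def] at hle
  have h1 : q.1 = p.1 := funext fun s => le_antisymm (hle.1 s) (by
    obtain ⟨t, ht⟩ := hc s
    have h2 := hq s t
    have h3 := hle.2 t
    linarith)
  have h2 : q.2 = p.2 := funext fun t => le_antisymm (hle.2 t) (by
    obtain ⟨s, hs⟩ := hr t
    have h3 := hq s t
    have h4 := hle.1 s
    linarith)
  exact Prod.ext h1 h2

lemma qq_lip_c (hμ : DirMetric μ) {p : Pt ↥S} (hp : p ∈ QQ μ) (t s : ↥S) :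
    p.1 t ≤ μ t s + p.1 s := by
  obtain ⟨u, hu⟩ := qq_tight_c hp t
  have h1 := hμ.2 t s u
  have h2 := hp.1 s u
  linarith

lemma qq_lip_r (hμ : DirMetric μ) {p : Pt ↥S} (hp : p ∈ QQ μ) (t s : ↥S) :
    p.2 t ≤ μ s t + p.2 s := by
  obtain ⟨u, hu⟩ := qq_tight_r hp t
  have h1 := hμ.2 u s t
  have h2 := hp.1 u s
  linarith

lemma dinf_mu_left (hμ : DirMetric μ) {p : Pt ↥S} (hp : p ∈ QP μ) (s : ↥S) :
    Dinf (muVec μ s) p = p.1 s := by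
  obtain ⟨hq, hpos⟩ := hp
  have hpos1 : ∀ t, 0 ≤ p.1 t := fun t => by have := hpos.1 t; simpa using this
  have hpos2 : ∀ t, 0 ≤ p.2 t := fun t => by have := hpos.2 t; simpa using this
  have hA : Dplus (muVec μ s).1 p.1 = p.1 s := by
    apply le_antisymm
    · apply dplus_le (hpos1 s)
      intro t
      have := qq_lip_c hμ hq t s
      simp only [muVec]
      linarith
    · have h := sub_le_dplus (muVec μ s).1 p.1 s
      have e : (muVec μ s).1 s = 0 := hμ.1.2 s
      rw [e] at h
      linarith
  have hB : Dplus p.2 (muVec μ s).2 = p.1 s := by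
    apply le_antisymm
    · apply dplus_le (hpos1 s)
      intro t
      have := hq.1 s t
      simp only [muVec]
      linarith
    · obtain ⟨t, ht⟩ := qq_tight_c hq s
      have h := sub_le_dplus p.2 (muVec μ s).2 t
      have e : (muVec μ s).2 t = μ s t := rfl
      rw [e] at h
      linarith
  simp [Dinf, hA, hB]

lemma dinf_mu_right (hμ : DirMetric μ) {p : Pt ↥S} (hp : p ∈ QP μ) (s : ↥S) :
    Dinf p (muVec μ s) = p.2 s := by
  obtain ⟨hq, hpos⟩ := hp
  have hpos1 : ∀ t, 0 ≤ p.1 t := fun t => by have := hpos.1 t; simpa using this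
  have hpos2 : ∀ t, 0 ≤ p.2 t := fun t => by have := hpos.2 t; simpa using this
  have hA : Dplus p.1 (muVec μ s).1 = p.2 s := by
    apply le_antisymm
    · apply dplus_le (hpos2 s)
      intro t
      have := hq.1 t s
      simp only [muVec]
      linarith
    · obtain ⟨u, hu⟩ := qq_tight_r hq s
      have h := sub_le_dplus p.1 (muVec μ s).1 u
      have e : (muVec μ s).1 u = μ u s := rfl
      rw [e] at h
      linarith
  have hB : Dplus (muVec μ s).2 p.2 = p.2 s := by
    apply le_antisymm
    · apply dplus_le (hpos2 s)
      intro t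
      have := qq_lip_r hμ hq t s
      simp only [muVec]
      linarith
    · have h := sub_le_dplus (muVec μ s).2 p.2 s
      have e : (muVec μ s).2 s = 0 := hμ.1.2 s
      rw [e] at h
      linarith
  simp [Dinf, hA, hB]

lemma muVec_mem_QP (hμ : DirMetric μ) (s : ↥S) : muVec μ s ∈ QP μ := by
  constructor
  · apply mem_qq_of_tight
    · intro t u
      exact hμ.2 t s u
    · intro t
      exact ⟨s, by simp [muVec, hμ.1.2]⟩
    · intro t
      exact ⟨s, by simp [muVec, hμ.1.2]⟩
  · rw [Set.mem_setOf_eq, Prod.le_def]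
    constructor
    · intro t; simpa [muVec] using hμ.1.1 t s
    · intro t; simpa [muVec] using hμ.1.1 s t

end QQl
end Stmt12Aux
namespace Stmt12Aux
section Main
variable {V : Type*} {S : Set V} [Fintype ↥S] [Nonempty ↥S] {μ : ↥S → ↥S → ℝ}

/-- The improving-extension predicate (negation of the key clause of cyclic tightness). -/
def Improves (S : Set V) (μ : ↥S → ↥S → ℝ) (d : V → V → ℝ) : Prop :=
  ∃ d' : V → V → ℝ, DirMetric d' ∧ (∀ s t : S, d' s t = μ s t) ∧
      (∀ (m : ℕ) (x : Fin (m + 1) → V), cycLen d' m x ≤ cycLen d m x) ∧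
      (∃ (m : ℕ) (x : Fin (m + 1) → V), cycLen d' m x < cycLen d m x)

lemma improves_congr {d D : V → V → ℝ} (h : ∀ m (x : Fin (m+1) → V), cycLen D m x = cycLen d m x) :
    Improves S μ D → Improves S μ d := by
  rintro ⟨d₃, h1, h2, h3, m, x, h4⟩
  exact ⟨d₃, h1, h2, fun m x => (h3 m x).trans (h m x).le, m, x, h4.trans_le (h m x).le⟩

lemma dVec_mem_PiP (d : V → V → ℝ) (hd : DirMetric d)
    (hext : ∀ s t : S, d s t = μ s t) (x : V) : dVec S d x ∈ PiP μ := by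
  intro s t
  have := hd.2 (↑s) x (↑t)
  rw [hext s t] at this
  exact this

lemma dVec_nonneg (d : V → V → ℝ) (hd : DirMetric d) (x : V) : (0 : Pt ↥S) ≤ dVec S d x := by
  rw [Prod.le_def]
  constructor
  · intro s; simpa [dVec] using hd.1.1 (↑s) x
  · intro s; simpa [dVec] using hd.1.1 x (↑s)

lemma dVec_coe (d : V → V → ℝ) (hext : ∀ s t : S, d s t = μ s t) (s : ↥S) :
    dVec S d (↑s) = muVec μ s :=
  Prod.ext (funext fun t => hext t s) (funext fun t => hext s t)

lemma dinf_dVec_le (d : V → V → ℝ) (hd : DirMetric d) (x y : V) :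
    Dinf (dVec S d x) (dVec S d y) ≤ d x y := by
  apply max_le
  · apply dplus_le (hd.1.1 x y)
    intro s
    have := hd.2 (↑s) x y
    simp only [dVec]
    linarith
  · apply dplus_le (hd.1.1 x y)
    intro s
    have := hd.2 x y (↑s)
    simp only [dVec]
    linarith

/-- The universal one-point perturbation lemma. -/
lemma lemmaP (μ : ↥S → ↥S → ℝ) (D : V → V → ℝ)
    (hD : DirMetric D) (hextD : ∀ s t : S, D s t = μ s t)
    (x₀ : V) (hx₀ : x₀ ∉ S) (δ : ℝ) (Pc Pr : V → ℝ)
    (hPc0 : ∀ a, a ≠ x₀ → 0 ≤ Pc a) (hPr0 : ∀ a, a ≠ x₀ → 0 ≤ Pr a)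
    (hLc : ∀ a c, a ≠ x₀ → c ≠ x₀ → Pc a ≤ D a c + Pc c)
    (hLr : ∀ a c, a ≠ x₀ → c ≠ x₀ → Pr a ≤ Pr c + D c a)
    (hmu : ∀ s t : S, μ s t ≤ Pc s + Pr t)
    (hdc : ∀ a, a ≠ x₀ → Pc a ≤ D a x₀ + δ)
    (hdr : ∀ a, a ≠ x₀ → Pr a ≤ D x₀ a - δ)
    (a₀ : V) (ha₀ : a₀ ≠ x₀) (hstrict : Pc a₀ + Pr a₀ < D a₀ x₀ + D x₀ a₀) :
    Improves S μ D := by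
  classical
  have hD0 : ∀ u v, 0 ≤ D u v := hD.1.1
  have hDd : ∀ u, D u u = 0 := hD.1.2
  have hDt : ∀ u v w, D u w ≤ D u v + D v w := fun u v w => hD.2 u v w
  set d₃ : V → V → ℝ := fun u v =>
    if u = x₀ then (if v = x₀ then (0:ℝ) else Pr v)
    else if v = x₀ then Pc u else min (D u v) (Pc u + Pr v) with hd₃def
  have E1 : ∀ v, v ≠ x₀ → d₃ x₀ v = Pr v := fun v hv => by simp [hd₃def, hv]
  have E2 : ∀ u, u ≠ x₀ → d₃ u x₀ = Pc u := fun u hu => by simp [hd₃def, hu]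
  have E3 : d₃ x₀ x₀ = 0 := by simp [hd₃def]
  have E4 : ∀ u v, u ≠ x₀ → v ≠ x₀ → d₃ u v = min (D u v) (Pc u + Pr v) :=
    fun u v hu hv => by simp [hd₃def, hu, hv]
  refine ⟨d₃, ⟨⟨?_, ?_⟩, ?_⟩, ?_, ?_, ?_⟩
  · -- nonneg
    intro u v
    by_cases hu : u = x₀ <;> by_cases hv : v = x₀
    · subst hu; subst hv; rw [E3]
    · subst hu; rw [E1 v hv]; exact hPr0 v hv
    · subst hv; rw [E2 u hu]; exact hPc0 u hu
    · rw [E4 u v hu hv]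
      exact le_min (hD0 u v) (add_nonneg (hPc0 u hu) (hPr0 v hv))
  · -- diagonal
    intro u
    by_cases hu : u = x₀
    · subst hu; exact E3
    · rw [E4 u u hu hu, hDd u]
      exact min_eq_left (add_nonneg (hPc0 u hu) (hPr0 u hu))
  · -- triangle
    intro u v w
    by_cases hu : u = x₀ <;> by_cases hv : v = x₀ <;> by_cases hw : w = x₀
    · subst hu; subst hv; subst hw; rw [E3]; norm_num
    · subst hu; subst hv; rw [E3, E1 w hw]; linarith
    · subst hu; subst hw; rw [E3, E1 v hv, E2 v hv]
      linarith [hPr0 v hv, hPc0 v hv]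
    · subst hu; rw [E1 w hw, E1 v hv, E4 v w hv hw]
      rcases min_cases (D v w) (Pc v + Pr w) with ⟨h, -⟩ | ⟨h, -⟩ <;> rw [h]
      · linarith [hLr w v hw hv]
      · linarith [hPc0 v hv, hPr0 v hv]
    · subst hv; subst hw; rw [E3, E2 u hu]; linarith
    · subst hv; rw [E4 u w hu hw, E2 u hu, E1 w hw]
      exact min_le_right _ _
    · subst hw; rw [E2 u hu, E4 u v hu hv, E2 v hv]
      rcases min_cases (D u v) (Pc u + Pr v) with ⟨h, -⟩ | ⟨h, -⟩ <;> rw [h]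
      · linarith [hLc u v hu hv]
      · linarith [hPr0 v hv, hPc0 v hv]
    · rw [E4 u w hu hw, E4 u v hu hv, E4 v w hv hw]
      rcases min_cases (D u v) (Pc u + Pr v) with ⟨h1, -⟩ | ⟨h1, -⟩ <;>
        rcases min_cases (D v w) (Pc v + Pr w) with ⟨h2, -⟩ | ⟨h2, -⟩ <;> rw [h1, h2]
      · exact le_trans (min_le_left _ _) (hDt u v w)
      · exact le_trans (min_le_right _ _) (by linarith [hLc u v hu hv])
      · exact le_trans (min_le_right _ _) (by linarith [hLr w v hw hv])
      · exact le_trans (min_le_right _ _) (by linarith [hPc0 v hv, hPr0 v hv])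
  · -- extension
    intro s t
    have hs : (↑s : V) ≠ x₀ := fun h => hx₀ (h ▸ s.2)
    have ht : (↑t : V) ≠ x₀ := fun h => hx₀ (h ▸ t.2)
    rw [E4 (↑s) (↑t) hs ht, hextD s t]
    exact min_eq_left (hmu s t)
  · -- cycles do not increase
    intro m x
    apply cycLen_le_of_edge (φ := fun w => if w = x₀ then δ else 0)
    intro u v
    by_cases hu : u = x₀ <;> by_cases hv : v = x₀
    · subst hu; subst hv; rw [E3, hDd]; simp
    · subst hu; rw [E1 v hv, if_pos rfl, if_neg hv]
      have := hdr v hv; linarith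
    · subst hv; rw [E2 u hu, if_pos rfl, if_neg hu]
      have := hdc u hu; linarith
    · rw [E4 u v hu hv, if_neg hu, if_neg hv]
      have := min_le_left (D u v) (Pc u + Pr v); linarith
  · -- a strictly shorter cycle
    refine ⟨1, ![a₀, x₀], ?_⟩
    rw [cycLen_two, cycLen_two, E2 a₀ ha₀, E1 a₀ ha₀]
    exact hstrict

/-- Shifting by a potential that vanishes on `S` (left version). -/
lemma shiftL (d : V → V → ℝ) (hd : DirMetric d) (hext : ∀ s t : S, d s t = μ s t)
    (g : V → ℝ) (hg0 : ∀ s : S, g s = 0) (hLip : ∀ a b, g a ≤ d a b + g b) :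
    DirMetric (fun a b => d a b - g a + g b) ∧
    (∀ s t : S, d (↑s) (↑t) - g (↑s) + g (↑t) = μ s t) ∧
    (∀ m (x : Fin (m+1) → V), cycLen (fun a b => d a b - g a + g b) m x = cycLen d m x) := by
  refine ⟨⟨⟨?_, ?_⟩, ?_⟩, ?_, ?_⟩
  · intro u v; have := hLip u v; simp only; linarith
  · intro u; simp only [hd.1.2 u]; ring
  · intro u v w; have := hd.2 u v w; simp only; linarith
  · intro s t; rw [hg0 s, hg0 t, hext s t]; ring
  · intro m x
    exact cycLen_eq_of_edge (φ := g) (fun u v => by ring) m x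

/-- Shifting by a potential that vanishes on `S` (right version). -/
lemma shiftR (d : V → V → ℝ) (hd : DirMetric d) (hext : ∀ s t : S, d s t = μ s t)
    (g : V → ℝ) (hg0 : ∀ s : S, g s = 0) (hLip : ∀ a b, g b ≤ d a b + g a) :
    DirMetric (fun a b => d a b + g a - g b) ∧
    (∀ s t : S, d (↑s) (↑t) + g (↑s) - g (↑t) = μ s t) ∧
    (∀ m (x : Fin (m+1) → V), cycLen (fun a b => d a b + g a - g b) m x = cycLen d m x) := by
  refine ⟨⟨⟨?_, ?_⟩, ?_⟩, ?_, ?_⟩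
  · intro u v; have := hLip u v; simp only; linarith
  · intro u; simp only [hd.1.2 u]; ring
  · intro u v w; have := hd.2 u v w; simp only; linarith
  · intro s t; rw [hg0 s, hg0 t, hext s t]; ring
  · intro m x
    exact cycLen_eq_of_edge (φ := fun w => -g w) (fun u v => by ring) m x

end Main
end Stmt12Aux
namespace Stmt12Aux
section Imps
variable {V : Type*} {S : Set V} [Fintype ↥S] [Nonempty ↥S] {μ : ↥S → ↥S → ℝ}

lemma impA_col_pos (d : V → V → ℝ) (hd : DirMetric d) (hext : ∀ s t : S, d s t = μ s t)
    (x : V) (s₀ : ↥S) (hslack : ∀ t : ↥S, μ s₀ t < d (↑s₀) x + d x ↑t)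
    (hpos : 0 < d (↑s₀) x) : Improves S μ d := by
  have hxS : x ∉ S := by
    intro hx
    have h1 := hslack ⟨x, hx⟩
    have h2 : d x ↑(⟨x, hx⟩ : ↥S) = 0 := hd.1.2 x
    rw [h2, add_zero, ← hext s₀ ⟨x, hx⟩] at h1
    exact lt_irrefl _ h1
  obtain ⟨t₁, ht₁⟩ := Finite.exists_min (fun t : ↥S => d (↑s₀) x + d x ↑t - μ s₀ t)
  set ε := d (↑s₀) x + d x ↑t₁ - μ s₀ t₁ with hεdef
  have hε : 0 < ε := by have := hslack t₁; simp only [hεdef]; linarith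
  have hεle : ∀ t : ↥S, ε ≤ d (↑s₀) x + d x ↑t - μ s₀ t := fun t => ht₁ t
  set θ := min ε (d (↑s₀) x) with hθdef
  have hθpos : 0 < θ := lt_min hε hpos
  have hθε : θ ≤ ε := min_le_left _ _
  have hθd : θ ≤ d (↑s₀) x := min_le_right _ _
  have hs₀x : (↑s₀ : V) ≠ x := fun h => hxS (h ▸ s₀.2)
  refine lemmaP μ d hd hext x hxS 0 (fun a => min (d a x) (d a ↑s₀ + d (↑s₀) x - θ))
    (fun b => d x b) ?_ ?_ ?_ ?_ ?_ ?_ ?_ (↑s₀) hs₀x ?_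
  · intro a _
    beta_reduce
    exact le_min (hd.1.1 a x) (by linarith [hd.1.1 a ↑s₀])
  · intro a _
    beta_reduce
    exact hd.1.1 x a
  · intro a c _ _
    beta_reduce
    rcases min_cases (d c x) (d c ↑s₀ + d (↑s₀) x - θ) with ⟨h, -⟩ | ⟨h, -⟩ <;> rw [h]
    · exact le_trans (min_le_left _ _) (hd.2 a c x)
    · exact le_trans (min_le_right _ _) (by linarith [hd.2 a c ↑s₀])
  · intro a c _ _
    beta_reduce
    exact hd.2 x c a
  · intro s t
    beta_reduce
    rcases min_cases (d ↑s x) (d ↑s ↑s₀ + d (↑s₀) x - θ) with ⟨h, -⟩ | ⟨h, -⟩ <;> rw [h]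
    · rw [← hext s t]; exact hd.2 (↑s) x ↑t
    · have e1 := hεle t
      have e2 := hd.2 (↑s) (↑s₀) (↑t)
      have e3 : μ s t = d ↑s ↑t := (hext s t).symm
      have e4 : μ s₀ t = d (↑s₀) ↑t := (hext s₀ t).symm
      linarith
  · intro a _
    beta_reduce
    rw [add_zero]; exact min_le_left _ _
  · intro a _
    beta_reduce
    rw [sub_zero]
  · beta_reduce
    have e : d (↑s₀) (↑s₀) = 0 := hd.1.2 ↑s₀
    rw [e, zero_add, min_eq_right (by linarith : d (↑s₀) x - θ ≤ d (↑s₀) x)]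
    linarith

lemma impA_col (d : V → V → ℝ) (hd : DirMetric d) (hext : ∀ s t : S, d s t = μ s t)
    (x : V) (s₀ : ↥S) (hslack : ∀ t : ↥S, μ s₀ t < d (↑s₀) x + d x ↑t) :
    Improves S μ d := by
  by_cases hpos : 0 < d (↑s₀) x
  · exact impA_col_pos d hd hext x s₀ hslack hpos
  · have hzero : d (↑s₀) x = 0 := le_antisymm (not_lt.mp hpos) (hd.1.1 _ _)
    obtain ⟨t₁, ht₁⟩ := Finite.exists_min (fun t : ↥S => d (↑s₀) x + d x ↑t - μ s₀ t)
    set ε := d (↑s₀) x + d x ↑t₁ - μ s₀ t₁ with hεdef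
    have hε : 0 < ε := by have := hslack t₁; simp only [hεdef]; linarith
    have hεle : ∀ t : ↥S, ε ≤ d (↑s₀) x + d x ↑t - μ s₀ t := fun t => ht₁ t
    set g : V → ℝ := fun w => max (ε - d x w) 0 with hgdef
    have hg0 : ∀ s : S, g ↑s = 0 := by
      intro s
      have h1 := hεle s
      have h2 : 0 ≤ μ s₀ s := by rw [← hext s₀ s]; exact hd.1.1 _ _
      simp only [hgdef]
      rw [max_eq_right]
      linarith
    have hLip : ∀ a b, g a ≤ d a b + g b := by
      intro a b
      simp only [hgdef]
      rcases max_cases (ε - d x a) (0:ℝ) with ⟨h, -⟩ | ⟨h, -⟩ <;> rw [h]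
      · have h1 := hd.2 x a b
        have h2 := le_max_left (ε - d x b) (0:ℝ)
        linarith
      · exact add_nonneg (hd.1.1 a b) (le_max_right _ _)
    obtain ⟨hD, hDext, hDcyc⟩ := shiftL d hd hext g hg0 hLip
    have hgx : g x = ε := by
      simp only [hgdef, hd.1.2 x, sub_zero]
      exact max_eq_left hε.le
    apply improves_congr hDcyc
    refine impA_col_pos _ hD hDext x s₀ ?_ ?_
    · intro t
      show μ s₀ t < (d (↑s₀) x - g ↑s₀ + g x) + (d x ↑t - g x + g ↑t)
      rw [hg0 s₀, hg0 t, hgx, hzero]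
      have := hslack t
      rw [hzero] at this
      linarith
    · show 0 < d (↑s₀) x - g ↑s₀ + g x
      rw [hg0 s₀, hgx, hzero]
      linarith

lemma impA_row_pos (d : V → V → ℝ) (hd : DirMetric d) (hext : ∀ s t : S, d s t = μ s t)
    (x : V) (t₀ : ↥S) (hslack : ∀ s : ↥S, μ s t₀ < d ↑s x + d x (↑t₀))
    (hpos : 0 < d x (↑t₀)) : Improves S μ d := by
  have hxS : x ∉ S := by
    intro hx
    have h1 := hslack ⟨x, hx⟩
    have h2 : d ↑(⟨x, hx⟩ : ↥S) x = 0 := hd.1.2 x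
    rw [h2, zero_add, ← hext ⟨x, hx⟩ t₀] at h1
    exact lt_irrefl _ h1
  obtain ⟨s₁, hs₁⟩ := Finite.exists_min (fun s : ↥S => d ↑s x + d x (↑t₀) - μ s t₀)
  set ε := d ↑s₁ x + d x (↑t₀) - μ s₁ t₀ with hεdef
  have hε : 0 < ε := by have := hslack s₁; simp only [hεdef]; linarith
  have hεle : ∀ s : ↥S, ε ≤ d ↑s x + d x (↑t₀) - μ s t₀ := fun s => hs₁ s
  set θ := min ε (d x (↑t₀)) with hθdef
  have hθpos : 0 < θ := lt_min hε hpos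
  have hθε : θ ≤ ε := min_le_left _ _
  have hθd : θ ≤ d x (↑t₀) := min_le_right _ _
  have ht₀x : (↑t₀ : V) ≠ x := fun h => hxS (h ▸ t₀.2)
  refine lemmaP μ d hd hext x hxS 0 (fun a => d a x)
    (fun b => min (d x b) (d x (↑t₀) - θ + d (↑t₀) b)) ?_ ?_ ?_ ?_ ?_ ?_ ?_ (↑t₀) ht₀x ?_
  · intro a _
    beta_reduce
    exact hd.1.1 a x
  · intro a _
    beta_reduce
    exact le_min (hd.1.1 x a) (by linarith [hd.1.1 (↑t₀) a])
  · intro a c _ _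
    beta_reduce
    exact hd.2 a c x
  · intro a c _ _
    beta_reduce
    rcases min_cases (d x c) (d x (↑t₀) - θ + d (↑t₀) c) with ⟨h, -⟩ | ⟨h, -⟩ <;> rw [h]
    · exact le_trans (min_le_left _ _) (by linarith [hd.2 x c a])
    · exact le_trans (min_le_right _ _) (by linarith [hd.2 (↑t₀) c a])
  · intro s t
    beta_reduce
    rcases min_cases (d x ↑t) (d x (↑t₀) - θ + d (↑t₀) ↑t) with ⟨h, -⟩ | ⟨h, -⟩ <;> rw [h]
    · rw [← hext s t]; exact hd.2 (↑s) x ↑t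
    · have e1 := hεle s
      have e2 := hd.2 (↑s) (↑t₀) (↑t)
      have e3 : μ s t = d ↑s ↑t := (hext s t).symm
      have e4 : μ s t₀ = d ↑s (↑t₀) := (hext s t₀).symm
      linarith
  · intro a _
    beta_reduce
    rw [add_zero]
  · intro a _
    beta_reduce
    rw [sub_zero]; exact min_le_left _ _
  · beta_reduce
    have e : d (↑t₀) (↑t₀) = 0 := hd.1.2 ↑t₀
    rw [e, add_zero, min_eq_right (by linarith : d x (↑t₀) - θ ≤ d x (↑t₀))]
    linarith

lemma impA_row (d : V → V → ℝ) (hd : DirMetric d) (hext : ∀ s t : S, d s t = μ s t)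
    (x : V) (t₀ : ↥S) (hslack : ∀ s : ↥S, μ s t₀ < d ↑s x + d x (↑t₀)) :
    Improves S μ d := by
  by_cases hpos : 0 < d x (↑t₀)
  · exact impA_row_pos d hd hext x t₀ hslack hpos
  · have hzero : d x (↑t₀) = 0 := le_antisymm (not_lt.mp hpos) (hd.1.1 _ _)
    obtain ⟨s₁, hs₁⟩ := Finite.exists_min (fun s : ↥S => d ↑s x + d x (↑t₀) - μ s t₀)
    set ε := d ↑s₁ x + d x (↑t₀) - μ s₁ t₀ with hεdef
    have hε : 0 < ε := by have := hslack s₁; simp only [hεdef]; linarith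
    have hεle : ∀ s : ↥S, ε ≤ d ↑s x + d x (↑t₀) - μ s t₀ := fun s => hs₁ s
    set g : V → ℝ := fun w => max (ε - d w x) 0 with hgdef
    have hg0 : ∀ s : S, g ↑s = 0 := by
      intro s
      have h1 := hεle s
      have h2 : 0 ≤ μ s t₀ := by rw [← hext s t₀]; exact hd.1.1 _ _
      simp only [hgdef]
      rw [max_eq_right]
      linarith
    have hLip : ∀ a b, g b ≤ d a b + g a := by
      intro a b
      simp only [hgdef]
      rcases max_cases (ε - d b x) (0:ℝ) with ⟨h, -⟩ | ⟨h, -⟩ <;> rw [h]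
      · have h1 := hd.2 a b x
        have h2 := le_max_left (ε - d a x) (0:ℝ)
        linarith
      · exact add_nonneg (hd.1.1 a b) (le_max_right _ _)
    obtain ⟨hD, hDext, hDcyc⟩ := shiftR d hd hext g hg0 hLip
    have hgx : g x = ε := by
      simp only [hgdef, hd.1.2 x, sub_zero]
      exact max_eq_left hε.le
    apply improves_congr hDcyc
    refine impA_row_pos _ hD hDext x t₀ ?_ ?_
    · intro s
      show μ s t₀ < (d ↑s x + g ↑s - g x) + (d x (↑t₀) + g x - g ↑t₀)
      rw [hg0 s, hg0 t₀, hgx, hzero]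
      have := hslack s
      rw [hzero] at this
      linarith
    · show 0 < d x (↑t₀) + g x - g ↑t₀
      rw [hg0 t₀, hgx, hzero]
      linarith

lemma impB (d : V → V → ℝ) (hd : DirMetric d) (hext : ∀ s t : S, d s t = μ s t)
    (hμ : DirMetric μ) (hQP : ∀ z, dVec S d z ∈ QP μ) (x y : V)
    (hlt : Dinf (dVec S d x) (dVec S d y) < d x y) : Improves S μ d := by
  set D₀ := Dinf (dVec S d x) (dVec S d y) with hD₀def
  have hD₀0 : 0 ≤ D₀ := le_trans (dplus_nonneg _ _) (le_max_left _ _)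
  have hyS : y ∉ S := by
    intro hy
    have h1 : dVec S d y = muVec μ ⟨y, hy⟩ := dVec_coe d hext ⟨y, hy⟩
    have h2 := dinf_mu_right hμ (hQP x) ⟨y, hy⟩
    rw [← h1] at h2
    have h3 : (dVec S d x).2 ⟨y, hy⟩ = d x y := rfl
    rw [h3] at h2
    rw [hD₀def] at hlt
    rw [h2] at hlt
    exact lt_irrefl _ hlt
  have hxy : x ≠ y := by
    intro h
    subst h
    rw [hd.1.2 x] at hlt
    linarith
  have hcol : ∀ s : ↥S, d ↑s y - d ↑s x ≤ D₀ := by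
    intro s
    have h1 := sub_le_dplus (dVec S d x).1 (dVec S d y).1 s
    exact le_trans h1 (le_max_left _ _)
  refine lemmaP μ d hd hext y hyS 0 (fun a => min (d a y) (d a x + D₀))
    (fun b => d y b) ?_ ?_ ?_ ?_ ?_ ?_ ?_ x hxy ?_
  · intro a _
    beta_reduce
    exact le_min (hd.1.1 a y) (by linarith [hd.1.1 a x])
  · intro a _
    beta_reduce
    exact hd.1.1 y a
  · intro a c _ _
    beta_reduce
    rcases min_cases (d c y) (d c x + D₀) with ⟨h, -⟩ | ⟨h, -⟩ <;> rw [h]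
    · exact le_trans (min_le_left _ _) (hd.2 a c y)
    · exact le_trans (min_le_right _ _) (by linarith [hd.2 a c x])
  · intro a c _ _
    beta_reduce
    exact hd.2 y c a
  · intro s t
    beta_reduce
    rcases min_cases (d ↑s y) (d ↑s x + D₀) with ⟨h, -⟩ | ⟨h, -⟩ <;> rw [h]
    · rw [← hext s t]; exact hd.2 (↑s) y ↑t
    · have e1 := hcol s
      have e2 := hd.2 (↑s) y (↑t)
      have e3 : μ s t = d ↑s ↑t := (hext s t).symm
      linarith
  · intro a _
    beta_reduce
    rw [add_zero]; exact min_le_left _ _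
  · intro a _
    beta_reduce
    rw [sub_zero]
  · beta_reduce
    rw [hd.1.2 x, zero_add, min_eq_right hlt.le]
    linarith

lemma impC_col (d : V → V → ℝ) (hd : DirMetric d) (hext : ∀ s t : S, d s t = μ s t)
    (htr : ∀ (z : V) (t : ↥S), ∃ s : ↥S, d ↑s z + d z ↑t = μ s t)
    (u v : V) (huv : ∀ s : ↥S, d ↑s u < d ↑s v) : Improves S μ d := by
  obtain ⟨s₁, hs₁⟩ := Finite.exists_min (fun s : ↥S => d ↑s v - d ↑s u)
  set ε := d ↑s₁ v - d ↑s₁ u with hεdef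
  have hεpos : 0 < ε := by have := huv s₁; simp only [hεdef]; linarith
  have hεle : ∀ s : ↥S, ε ≤ d ↑s v - d ↑s u := fun s => hs₁ s
  have step1 : ∀ t : ↥S, d v ↑t + ε ≤ d u ↑t := by
    intro t
    obtain ⟨s, hs⟩ := htr v t
    have h1 : μ s t ≤ d ↑s u + d u ↑t := by rw [← hext s t]; exact hd.2 (↑s) u ↑t
    have h2 := hεle s
    linarith
  have huS : u ∉ S := by
    intro hu
    have h1 := step1 ⟨u, hu⟩
    have h2 : d u ↑(⟨u, hu⟩ : ↥S) = 0 := hd.1.2 u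
    rw [h2] at h1
    linarith [hd.1.1 v u]
  have hvu : v ≠ u := by
    intro h
    rw [h] at huv
    exact lt_irrefl _ (huv s₁)
  set g : V → ℝ := fun w => max (ε - d u w) 0 with hgdef
  have hg0 : ∀ s : S, g ↑s = 0 := by
    intro s
    simp only [hgdef]
    rw [max_eq_right]
    have h1 := step1 s
    have h2 := hd.1.1 v ↑s
    linarith
  have hLip : ∀ a b, g a ≤ d a b + g b := by
    intro a b
    simp only [hgdef]
    rcases max_cases (ε - d u a) (0:ℝ) with ⟨h, -⟩ | ⟨h, -⟩ <;> rw [h]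
    · have h1 := hd.2 u a b
      have h2 := le_max_left (ε - d u b) (0:ℝ)
      linarith
    · exact add_nonneg (hd.1.1 a b) (le_max_right _ _)
  obtain ⟨hD, hDext, hDcyc⟩ := shiftL d hd hext g hg0 hLip
  have hgu : g u = ε := by
    simp only [hgdef, hd.1.2 u, sub_zero]
    exact max_eq_left hεpos.le
  have hgv : g v = 0 := by
    simp only [hgdef]
    rw [max_eq_right]
    have h1 := hd.2 (↑s₁) u v
    have h2 := hεle s₁
    linarith
  apply improves_congr hDcyc
  set D : V → V → ℝ := fun a b => d a b - g a + g b with hDdef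
  have hDut : ∀ t : ↥S, D v ↑t ≤ D u ↑t := by
    intro t
    simp only [hDdef]
    rw [hgu, hgv, hg0 t]
    have := step1 t
    linarith
  refine lemmaP μ D hD hDext u huS 0 (fun a => min (D a u) (D a v))
    (fun b => D u b) ?_ ?_ ?_ ?_ ?_ ?_ ?_ v hvu ?_
  · intro a _
    beta_reduce
    exact le_min (hD.1.1 a u) (hD.1.1 a v)
  · intro a _
    beta_reduce
    exact hD.1.1 u a
  · intro a c _ _
    beta_reduce
    rcases min_cases (D c u) (D c v) with ⟨h, -⟩ | ⟨h, -⟩ <;> rw [h]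
    · exact le_trans (min_le_left _ _) (hD.2 a c u)
    · exact le_trans (min_le_right _ _) (hD.2 a c v)
  · intro a c _ _
    beta_reduce
    exact hD.2 u c a
  · intro s t
    beta_reduce
    rcases min_cases (D ↑s u) (D ↑s v) with ⟨h, -⟩ | ⟨h, -⟩ <;> rw [h]
    · rw [← hDext s t]; exact hD.2 (↑s) u ↑t
    · have e1 := hD.2 (↑s) v ↑t
      have e2 := hDut t
      have e0 : μ s t = D ↑s ↑t := (hDext s t).symm
      rw [e0]
      linarith
  · intro a _
    beta_reduce
    rw [add_zero]; exact min_le_left _ _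
  · intro a _
    beta_reduce
    rw [sub_zero]
  · beta_reduce
    have h1 : D v v = 0 := hD.1.2 v
    have h2 : min (D v u) (D v v) ≤ 0 := by rw [h1]; exact min_le_right _ _
    have h3 : 0 < D v u := by
      simp only [hDdef]
      rw [hgv, hgu]
      linarith [hd.1.1 v u]
    linarith

lemma impC_row (d : V → V → ℝ) (hd : DirMetric d) (hext : ∀ s t : S, d s t = μ s t)
    (htc : ∀ (z : V) (s : ↥S), ∃ t : ↥S, d ↑s z + d z ↑t = μ s t)
    (u v : V) (huv : ∀ s : ↥S, d u ↑s < d v ↑s) : Improves S μ d := by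
  obtain ⟨s₁, hs₁⟩ := Finite.exists_min (fun s : ↥S => d v ↑s - d u ↑s)
  set ε := d v ↑s₁ - d u ↑s₁ with hεdef
  have hεpos : 0 < ε := by have := huv s₁; simp only [hεdef]; linarith
  have hεle : ∀ s : ↥S, ε ≤ d v ↑s - d u ↑s := fun s => hs₁ s
  have step1 : ∀ s : ↥S, d ↑s v + ε ≤ d ↑s u := by
    intro s
    obtain ⟨t, ht⟩ := htc v s
    have h1 : μ s t ≤ d ↑s u + d u ↑t := by rw [← hext s t]; exact hd.2 (↑s) u ↑t
    have h2 := hεle t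
    linarith
  have huS : u ∉ S := by
    intro hu
    have h1 := step1 ⟨u, hu⟩
    have h2 : d ↑(⟨u, hu⟩ : ↥S) u = 0 := hd.1.2 u
    rw [h2] at h1
    linarith [hd.1.1 u v]
  have hvu : v ≠ u := by
    intro h
    rw [h] at huv
    exact lt_irrefl _ (huv s₁)
  set g : V → ℝ := fun w => max (ε - d w u) 0 with hgdef
  have hg0 : ∀ s : S, g ↑s = 0 := by
    intro s
    simp only [hgdef]
    rw [max_eq_right]
    have h1 := step1 s
    have h2 := hd.1.1 ↑s v
    linarith
  have hLip : ∀ a b, g b ≤ d a b + g a := by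
    intro a b
    simp only [hgdef]
    rcases max_cases (ε - d b u) (0:ℝ) with ⟨h, -⟩ | ⟨h, -⟩ <;> rw [h]
    · have h1 := hd.2 a b u
      have h2 := le_max_left (ε - d a u) (0:ℝ)
      linarith
    · exact add_nonneg (hd.1.1 a b) (le_max_right _ _)
  obtain ⟨hD, hDext, hDcyc⟩ := shiftR d hd hext g hg0 hLip
  have hgu : g u = ε := by
    simp only [hgdef, hd.1.2 u, sub_zero]
    exact max_eq_left hεpos.le
  have hgv : g v = 0 := by
    simp only [hgdef]
    rw [max_eq_right]
    have h1 := hd.2 v u ↑s₁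
    have h2 := hεle s₁
    linarith
  apply improves_congr hDcyc
  set D : V → V → ℝ := fun a b => d a b + g a - g b with hDdef
  have hDsu : ∀ s : ↥S, D ↑s v ≤ D ↑s u := by
    intro s
    simp only [hDdef]
    rw [hgu, hgv, hg0 s]
    have := step1 s
    linarith
  refine lemmaP μ D hD hDext u huS 0 (fun a => D a u)
    (fun b => min (D u b) (D v b)) ?_ ?_ ?_ ?_ ?_ ?_ ?_ v hvu ?_
  · intro a _
    beta_reduce
    exact hD.1.1 a u
  · intro a _
    beta_reduce
    exact le_min (hD.1.1 u a) (hD.1.1 v a)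
  · intro a c _ _
    beta_reduce
    exact hD.2 a c u
  · intro a c _ _
    beta_reduce
    rcases min_cases (D u c) (D v c) with ⟨h, -⟩ | ⟨h, -⟩ <;> rw [h]
    · exact le_trans (min_le_left _ _) (hD.2 u c a)
    · exact le_trans (min_le_right _ _) (hD.2 v c a)
  · intro s t
    beta_reduce
    rcases min_cases (D u ↑t) (D v ↑t) with ⟨h, -⟩ | ⟨h, -⟩ <;> rw [h]
    · rw [← hDext s t]; exact hD.2 (↑s) u ↑t
    · have e1 := hD.2 (↑s) v ↑t
      have e2 := hDsu s
      have e0 : μ s t = D ↑s ↑t := (hDext s t).symm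
      rw [e0]
      linarith
  · intro a _
    beta_reduce
    rw [add_zero]
  · intro a _
    beta_reduce
    rw [sub_zero]; exact min_le_left _ _
  · beta_reduce
    have h1 : D v v = 0 := hD.1.2 v
    have h2 : min (D u v) (D v v) ≤ 0 := by rw [h1]; exact min_le_right _ _
    have h3 : 0 < D u v := by
      simp only [hDdef]
      rw [hgv, hgu]
      linarith [hd.1.1 u v]
    linarith

end Imps
end Stmt12Aux
namespace Stmt12Aux
section Force
variable {V : Type*} {S : Set V} [Fintype ↥S] [Nonempty ↥S] {μ : ↥S → ↥S → ℝ}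

lemma tight_of (d : V → V → ℝ) (hd : DirMetric d) (hext : ∀ s t : S, d s t = μ s t)
    (hQQ : ∀ z, dVec S d z ∈ QQ μ)
    (hBp : ∀ x y : V, (∃ s : ↥S, d ↑s x + d x y = d ↑s y) ∨
      (∃ t : ↥S, d x y + d y ↑t = d x ↑t)) :
    ¬ Improves S μ d := by
  rintro ⟨d', hd', hext', hle, m₀, x₀, hstrict⟩
  classical
  set c : V → V → ℝ := fun u v => d u v - d' u v with hcdef
  have hcyc : ∀ (m : ℕ) (x : Fin (m+1) → V), 0 ≤ cycLen c m x := by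
    intro m x
    have h1 := hle m x
    have h2 : cycLen c m x = cycLen d m x - cycLen d' m x := cycLen_sub d d' m x
    linarith
  have hcS : ∀ s t : ↥S, c ↑s ↑t = 0 := by
    intro s t
    simp only [hcdef]
    rw [hext s t, hext' s t]
    ring
  obtain ⟨s₀⟩ : Nonempty ↥S := inferInstance
  set W : V → Set ℝ := fun v => {r | ∃ (m : ℕ) (w : Fin (m+1) → V), w 0 = v ∧
      w (Fin.last m) = (↑s₀ : V) ∧ r = ∑ i : Fin m, c (w i.castSucc) (w i.succ)} with hWdef
  have hWmem : ∀ v, c v ↑s₀ ∈ W v := by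
    intro v
    refine ⟨1, ![v, ↑s₀], by simp, by simp [Fin.last], ?_⟩
    rw [Fin.sum_univ_one]
    norm_num
  have key : ∀ v r, r ∈ W v → -(c ↑s₀ v) ≤ r := by
    rintro v r ⟨m, w, h0, hl, rfl⟩
    have h1 : cycLen c m w = (∑ i : Fin m, c (w i.castSucc) (w i.succ)) + c (w (Fin.last m)) (w 0) := by
      rw [cycLen, Fin.sum_univ_castSucc]
      congr 1
      · refine Finset.sum_congr rfl fun i _ => ?_
        rw [Fin.coeSucc_eq_succ]
      · rw [Fin.last_add_one]
    have h2 := hcyc m w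
    rw [h1, h0, hl] at h2
    linarith
  have hbdd : ∀ v, BddBelow (W v) := fun v => ⟨-(c ↑s₀ v), fun r hr => key v r hr⟩
  have hne : ∀ v, (W v).Nonempty := fun v => ⟨_, hWmem v⟩
  set f : V → ℝ := fun v => sInf (W v) with hfdef
  have hf_le : ∀ v, f v ≤ c v ↑s₀ := fun v => csInf_le (hbdd v) (hWmem v)
  have hf_ge : ∀ v, -(c ↑s₀ v) ≤ f v := fun v => le_csInf (hne v) (key v)
  have hf_pre : ∀ u v, f u ≤ c u v + f v := by
    intro u v
    have hstep : ∀ r ∈ W v, sInf (W u) ≤ c u v + r := by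
      rintro r ⟨m, w, h0, hl, rfl⟩
      refine csInf_le (hbdd u) ⟨m+1, Fin.cons u w, rfl, ?_, ?_⟩
      · rw [← Fin.succ_last, Fin.cons_succ]
        exact hl
      · rw [Fin.sum_univ_succ]
        congr 1
        · simp [h0]
    have h3 : sInf (W u) - c u v ≤ sInf (W v) :=
      le_csInf (hne v) (fun r hr => by linarith [hstep r hr])
    simp only [hfdef]
    linarith
  have hfS : ∀ s : ↥S, f ↑s = 0 := by
    intro s
    have h1 := hf_le (↑s : V)
    have h2 := hf_ge (↑s : V)
    rw [hcS s s₀] at h1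
    rw [hcS s₀ s] at h2
    simp at h2
    linarith
  set D2 : V → V → ℝ := fun u v => d' u v + f u - f v with hD2def
  have hD2le : ∀ u v, D2 u v ≤ d u v := by
    intro u v
    have h1 := hf_pre u v
    simp only [hD2def, hcdef] at h1 ⊢
    linarith
  have hD2tri : ∀ a b e, D2 a e ≤ D2 a b + D2 b e := by
    intro a b e
    have := hd'.2 a b e
    simp only [hD2def]
    linarith
  have hforce : ∀ z, (∀ s : ↥S, D2 ↑s z = d ↑s z) ∧ (∀ s : ↥S, D2 z ↑s = d z ↑s) := by
    intro z
    set q : Pt ↥S := (fun s => D2 ↑s z, fun s => D2 z ↑s) with hqdef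
    have hqPi : q ∈ PiP μ := by
      intro s t
      have h1 := hD2tri ↑s z ↑t
      have h2 : D2 ↑s ↑t = μ s t := by
        simp only [hD2def]
        rw [hfS s, hfS t, hext' s t]
        ring
      rw [h2] at h1
      exact h1
    have hqle : q ≤ dVec S d z := by
      rw [Prod.le_def]
      exact ⟨fun s => hD2le ↑s z, fun s => hD2le z ↑s⟩
    have heq := (hQQ z).2 q hqPi hqle
    constructor
    · intro s
      have := congrFun (congrArg Prod.fst heq) s
      exact this
    · intro s
      have := congrFun (congrArg Prod.snd heq) s
      exact this
  have hD2ge : ∀ x y, d x y ≤ D2 x y := by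
    intro x y
    rcases hBp x y with ⟨s, hs⟩ | ⟨t, ht⟩
    · have h1 := hD2tri ↑s x y
      rw [(hforce y).1 s, (hforce x).1 s] at h1
      linarith
    · have h1 := hD2tri x y ↑t
      rw [(hforce x).2 t, (hforce y).2 t] at h1
      linarith
  have hD2eq : ∀ u v, D2 u v = d u v := fun u v => le_antisymm (hD2le u v) (hD2ge u v)
  have h1 : cycLen D2 m₀ x₀ = cycLen d' m₀ x₀ :=
    cycLen_eq_of_edge (φ := fun w => - f w) (fun u v => by simp only [hD2def]; ring) m₀ x₀
  have h2 : cycLen D2 m₀ x₀ = cycLen d m₀ x₀ := by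
    unfold cycLen
    exact Finset.sum_congr rfl fun i _ => hD2eq _ _
  linarith
end Force
end Stmt12Aux
namespace Stmt12Aux
section Uniq
variable {V : Type*} {S : Set V} [Fintype ↥S] [Nonempty ↥S] {μ : ↥S → ↥S → ℝ}

lemma rho_eq (hμ : DirMetric μ) (d : V → V → ℝ) (ρ : V → Pt ↥S)
    (hQP : ∀ z, ρ z ∈ QP μ)
    (hiso : ∀ x y, Dinf (ρ x) (ρ y) = d x y)
    (hcoe : ∀ s : S, ρ s = muVec μ s) (x : V) :
    ρ x = dVec S d x := by
  have h1 : ∀ s : ↥S, (ρ x).1 s = d ↑s x := by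
    intro s
    have h := hiso (↑s) x
    rw [hcoe s, dinf_mu_left hμ (hQP x) s] at h
    exact h
  have h2 : ∀ s : ↥S, (ρ x).2 s = d x ↑s := by
    intro s
    have h := hiso x (↑s)
    rw [hcoe s, dinf_mu_right hμ (hQP x) s] at h
    exact h
  exact Prod.ext (funext h1) (funext h2)

end Uniq
end Stmt12Aux

open Stmt12Aux

/-- Theorem 2.12 (2).  An extension `d` of `μ` is cyclically tight iff there is an
isometric embedding `ρ : V → Q_μ^+` with `ρ(s) = μ_s` for `s ∈ S` and `ρ(V)`
balanced; moreover if `d` is cyclically tight then any such `ρ` is `x ↦ d_x`. -/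
theorem stmt12 {V : Type*} (S : Set V) [Fintype S] (hS : S.Nonempty)
    (μ : S → S → ℝ) (hμ : DirMetric μ)
    (d : V → V → ℝ) (hd : DirMetric d) (hext : ∀ s t : S, d s t = μ s t) :
    (IsCycTightExt S μ d ↔
      ∃ ρ : V → Pt S, (∀ x, ρ x ∈ QP μ) ∧
        (∀ x y, Dinf (ρ x) (ρ y) = d x y) ∧
        (∀ s : S, ρ s = muVec μ s) ∧
        BalancedSet (Set.range ρ)) ∧
    (IsCycTightExt S μ d →
      ∀ ρ : V → Pt S, (∀ x, ρ x ∈ QP μ) →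
        (∀ x y, Dinf (ρ x) (ρ y) = d x y) →
        (∀ s : S, ρ s = muVec μ s) →
        BalancedSet (Set.range ρ) →
        ∀ x, ρ x = dVec S d x) := by
  haveI : Nonempty ↥S := hS.to_subtype
  constructor
  · constructor
    · -- tight → exists ρ
      intro ht
      have hnoimp : ¬ Improves S μ d := ht.2.2
      have htc : ∀ (z : V) (s : ↥S), ∃ t : ↥S, d ↑s z + d z ↑t = μ s t := by
        intro z s
        by_contra h
        push_neg at h
        have hslack : ∀ t : ↥S, μ s t < d ↑s z + d z ↑t := fun t =>
          lt_of_le_of_ne (dVec_mem_PiP d hd hext z s t) (fun e => h t e.symm)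
        exact hnoimp (impA_col d hd hext z s hslack)
      have htr : ∀ (z : V) (t : ↥S), ∃ s : ↥S, d ↑s z + d z ↑t = μ s t := by
        intro z t
        by_contra h
        push_neg at h
        have hslack : ∀ s : ↥S, μ s t < d ↑s z + d z ↑t := fun s =>
          lt_of_le_of_ne (dVec_mem_PiP d hd hext z s t) (fun e => h s e.symm)
        exact hnoimp (impA_row d hd hext z t hslack)
      have hQQ : ∀ z, dVec S d z ∈ QQ μ := fun z =>
        mem_qq_of_tight (dVec_mem_PiP d hd hext z) (htc z) (htr z)
      have hQP : ∀ z, dVec S d z ∈ QP μ := fun z => ⟨hQQ z, dVec_nonneg d hd z⟩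
      refine ⟨dVec S d, hQP, ?_, fun s => dVec_coe d hext s, ?_⟩
      · intro x y
        refine le_antisymm (dinf_dVec_le d hd x y) ?_
        by_contra h
        push_neg at h
        exact hnoimp (impB d hd hext hμ hQP x y h)
      · constructor
        · rintro ⟨p, ⟨u, rfl⟩, q, ⟨v, rfl⟩, hlt⟩
          exact hnoimp (impC_col d hd hext htr u v hlt)
        · rintro ⟨p, ⟨u, rfl⟩, q, ⟨v, rfl⟩, hlt⟩
          exact hnoimp (impC_row d hd hext htc u v hlt)
    · -- exists ρ → tight
      rintro ⟨ρ, hQPρ, hiso, hcoe, hbal⟩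
      have hρ : ∀ z, ρ z = dVec S d z := fun z => rho_eq hμ d ρ hQPρ hiso hcoe z
      have hQQd : ∀ z, dVec S d z ∈ QQ μ := fun z => by
        have := (hQPρ z).1
        rwa [hρ z] at this
      have hBp : ∀ x y : V, (∃ s : ↥S, d ↑s x + d x y = d ↑s y) ∨
          (∃ t : ↥S, d x y + d y ↑t = d x ↑t) := by
        intro x y
        by_cases h0 : d x y = 0
        · left
          have hle : ∀ s : ↥S, d ↑s y ≤ d ↑s x := by
            intro s
            have := hd.2 (↑s) x y
            rw [h0] at this
            linarith
          have hnotall : ¬ ∀ s : ↥S, d ↑s y < d ↑s x := by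
            intro hall
            refine hbal.1 ⟨ρ y, ⟨y, rfl⟩, ρ x, ⟨x, rfl⟩, fun s => ?_⟩
            rw [hρ x, hρ y]
            exact hall s
          push_neg at hnotall
          obtain ⟨s, hs⟩ := hnotall
          exact ⟨s, by rw [h0]; rw [add_zero]; exact le_antisymm hs (hle s)⟩
        · have hpos : 0 < d x y := lt_of_le_of_ne (hd.1.1 x y) (Ne.symm h0)
          have hDeq : Dinf (dVec S d x) (dVec S d y) = d x y := by
            have h := hiso x y
            rw [hρ x, hρ y] at h
            exact h
          rcases le_or_gt (Dplus (dVec S d y).2 (dVec S d x).2)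
              (Dplus (dVec S d x).1 (dVec S d y).1) with hc | hc
          · left
            have hA : Dplus (dVec S d x).1 (dVec S d y).1 = d x y := by
              rw [← hDeq]
              exact (max_eq_left hc).symm
            obtain ⟨s, hs⟩ := dplus_exists (dVec S d x).1 (dVec S d y).1
            have h1 : max (d ↑s y - d ↑s x) 0 = d x y := hs.symm.trans hA
            refine ⟨s, ?_⟩
            rcases max_cases (d ↑s y - d ↑s x) (0:ℝ) with ⟨h2, -⟩ | ⟨h2, -⟩
            · rw [h2] at h1; linarith
            · rw [h2] at h1; linarith
          · right
            have hB : Dplus (dVec S d y).2 (dVec S d x).2 = d x y := by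
              rw [← hDeq]
              exact (max_eq_right hc.le).symm
            obtain ⟨t, htw⟩ := dplus_exists (dVec S d y).2 (dVec S d x).2
            have h1 : max (d x ↑t - d y ↑t) 0 = d x y := htw.symm.trans hB
            refine ⟨t, ?_⟩
            rcases max_cases (d x ↑t - d y ↑t) (0:ℝ) with ⟨h2, -⟩ | ⟨h2, -⟩
            · rw [h2] at h1; linarith
            · rw [h2] at h1; linarith
      exact ⟨hd, hext, tight_of d hd hext hQQd hBp⟩
  · -- moreover
    intro _ ρ hQPρ hiso hcoe _ x
    exact rho_eq hμ d ρ hQPρ hiso hcoe x
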